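/- Let y ∈ ℝ, τ > 1/γ where γ = log 2 / log 3, and let μ be the natural measure on the middle-third Cantor set. Define A_n^y(n^(−τ)) = {x ∈ ℝ : ‖2^n x − y‖ < n^(−τ)}. Then Σ_{n=1}^∞ μ(A_n^y(n^(−τ))) < ∞, and consequently μ-almost no x satisfies ‖2^n x − y‖ < n^(−τ) for infinitely many n. -/

import Mathlib

open MeasureTheory Set
open scoped ENNReal

/-- the Hausdorff dimension of the middle-third Cantor set -/
noncomputable def cantorDim : ℝ := Real.log 2 / Real.log 3

noncomputable def cEnd : List Bool → ℝ
  | [] => 0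
  | b :: l => (cEnd l + if b then 2 else 0) / 3

def cI (l : List Bool) : Set ℝ := Icc (cEnd l) (cEnd l + (1/3) ^ l.length)

lemma cEnd_nonneg (l : List Bool) : 0 ≤ cEnd l := by
  induction l with
  | nil => simp [cEnd]
  | cons b l ih =>
      have : (0:ℝ) ≤ if b then 2 else 0 := by cases b <;> norm_num
      simp only [cEnd]; linarith

lemma cEnd_add_le (l : List Bool) : cEnd l + (1/3 : ℝ) ^ l.length ≤ 1 := by
  induction l with
  | nil => norm_num [cEnd]
  | cons b l ih =>
      have : (if b then (2:ℝ) else 0) ≤ 2 := by cases b <;> norm_num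
      simp only [cEnd, List.length_cons, pow_succ]
      nlinarith [ih]

lemma preCantorSet_subset (m : ℕ) :
    ∀ x ∈ preCantorSet m, ∃ l : List Bool, l.length = m ∧ x ∈ cI l := by
  induction m with
  | zero =>
      intro x hx
      exact ⟨[], rfl, by simpa [cI, cEnd] using hx⟩
  | succ m ih =>
      rintro x hx
      rcases hx with ⟨x', hx', rfl⟩ | ⟨x', hx', rfl⟩
      · obtain ⟨l, hl, hxl⟩ := ih x' hx'
        refine ⟨false :: l, by simp [hl], ?_⟩
        simp only [cI, cEnd, List.length_cons, hl, mem_Icc, pow_succ, if_neg Bool.false_ne_true] at hxl ⊢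
        constructor <;> nlinarith [hxl.1, hxl.2]
      · obtain ⟨l, hl, hxl⟩ := ih x' hx'
        refine ⟨true :: l, by simp [hl], ?_⟩
        simp only [cI, cEnd, List.length_cons, hl, mem_Icc, pow_succ, if_true] at hxl ⊢
        constructor <;> nlinarith [hxl.1, hxl.2]

lemma cantorSet_subset_cI (m : ℕ) :
    ∀ x ∈ cantorSet, ∃ l : List Bool, l.length = m ∧ x ∈ cI l :=
  fun x hx => preCantorSet_subset m x (Set.mem_iInter.mp hx m)

lemma cEnd_append (l t : List Bool) :
    cEnd l ≤ cEnd (l ++ t) ∧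
      cEnd (l ++ t) + (1/3 : ℝ) ^ (l ++ t).length ≤ cEnd l + (1/3) ^ l.length := by
  induction l with
  | nil =>
      refine ⟨cEnd_nonneg t, ?_⟩
      simpa [cEnd] using cEnd_add_le t
  | cons b l ih =>
      have h3 : ∀ n : ℕ, ((1:ℝ)/3) ^ (n+1) = (1/3) ^ n / 3 := fun n => by
        rw [pow_succ]; ring
      simp only [List.cons_append, List.append_eq, cEnd, List.length_cons,
        List.length_append] at ih ⊢
      rw [h3, h3]
      constructor
      · linarith [ih.1]
      · have := ih.2
        linarith

lemma cI_append_subset (l t : List Bool) : cI (l ++ t) ⊆ cI l := by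
  intro x hx
  simp only [cI, mem_Icc] at hx ⊢
  exact ⟨le_trans (cEnd_append l t).1 hx.1, le_trans hx.2 (cEnd_append l t).2⟩

lemma cEnd_sep : ∀ (l l' : List Bool), l.length = l'.length → l ≠ l' →
    2 * (1/3 : ℝ) ^ l.length ≤ |cEnd l - cEnd l'| := by
  intro l
  induction l with
  | nil =>
      intro l' h h'
      exact absurd (List.length_eq_zero_iff.mp h.symm).symm h'
  | cons b l ih =>
      intro l' hlen hne
      match l' with
      | [] => simp at hlen
      | b' :: l'' =>
          simp only [List.length_cons, Nat.add_right_cancel_iff] at hlen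
          have h3 : ∀ n : ℕ, ((1:ℝ)/3) ^ (n+1) = (1/3) ^ n / 3 := fun n => by
            rw [pow_succ]; ring
          by_cases hb : b = b'
          · subst hb
            have hne' : l ≠ l'' := fun e => hne (by rw [e])
            have hsep := ih l'' hlen hne'
            have heq : cEnd (b :: l) - cEnd (b :: l'') = (cEnd l - cEnd l'') / 3 := by
              simp only [cEnd]; ring
            rw [List.length_cons, heq, abs_div, h3]
            rw [abs_of_pos (by norm_num : (0:ℝ) < 3)]
            linarith
          · -- first digits differ
            have key : ∀ (a a' : ℝ) (n : ℕ), 0 ≤ a → a' + (1/3)^n ≤ 1 →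
                2 * ((1:ℝ)/3) ^ (n+1) ≤ (a + 2) / 3 - (a' + 0) / 3 := by
              intro a a' n ha ha'
              rw [h3]
              have : ((1:ℝ)/3)^n ≤ 1 := by
                apply pow_le_one₀ <;> norm_num
              nlinarith
            rw [List.length_cons]
            cases b <;> cases b'
            · exact absurd rfl hb
            · -- b = false, b' = true
              refine le_abs.mpr (Or.inr ?_)
              have := key (cEnd l'') (cEnd l) l.length (cEnd_nonneg l'')
                (cEnd_add_le l)
              simp only [cEnd, if_true, Bool.false_eq_true, if_false, neg_sub]
              linarith
            · -- b = true, b' = false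
              refine le_abs.mpr (Or.inl ?_)
              have := key (cEnd l) (cEnd l'') l.length (cEnd_nonneg l)
                (by rw [hlen]; exact cEnd_add_le l'')
              simp only [cEnd, if_true, Bool.false_eq_true, if_false]
              linarith
            · exact absurd rfl hb

lemma cI_disjoint {l l' : List Bool} (h : l.length = l'.length) {x : ℝ}
    (hx : x ∈ cI l) (hx' : x ∈ cI l') : l = l' := by
  by_contra hne
  have hsep := cEnd_sep l l' h hne
  simp only [cI, mem_Icc] at hx hx'
  have hpos : (0:ℝ) < (1/3) ^ l.length := by positivity
  have h1 : |cEnd l - cEnd l'| ≤ (1/3)^l.length := by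
    rw [abs_sub_le_iff]
    rw [h] at hx ⊢
    constructor <;> linarith [hx.1, hx.2, hx'.1, hx'.2]
  linarith

lemma cantor_refine {x : ℝ} (hx : x ∈ cantorSet) {l : List Bool} (hxl : x ∈ cI l) (j : ℕ) :
    ∃ t : List Bool, t.length = j ∧ x ∈ cI (l ++ t) := by
  obtain ⟨r, hr, hxr⟩ := cantorSet_subset_cI (l.length + j) x hx
  have hlen : l.length ≤ r.length := by omega
  have htake : (r.take l.length).length = l.length := by
    rw [List.length_take]; omega
  have hxtake : x ∈ cI (r.take l.length) := by
    apply cI_append_subset (r.take l.length) (r.drop l.length)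
    rw [List.take_append_drop]; exact hxr
  have heq : r.take l.length = l := cI_disjoint htake hxtake hxl
  have hlr : l ++ r.drop l.length = r := by
    conv_rhs => rw [← List.take_append_drop l.length r, heq]
  exact ⟨r.drop l.length, by rw [List.length_drop, hr]; omega, by rw [hlr]; exact hxr⟩

lemma cantorDim_pos : 0 < cantorDim :=
  div_pos (Real.log_pos (by norm_num)) (Real.log_pos (by norm_num))

lemma cantorDim_le_one : cantorDim ≤ 1 := by
  rw [cantorDim, div_le_one (Real.log_pos (by norm_num))]
  exact Real.log_le_log (by norm_num) (by norm_num)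

lemma one_third_rpow_base : (1/3 : ℝ) ^ cantorDim = 1/2 := by
  have h3 : (0:ℝ) < 1/3 := by norm_num
  rw [Real.rpow_def_of_pos h3, one_div, Real.log_inv, cantorDim]
  have hlog3 : Real.log 3 ≠ 0 := ne_of_gt (Real.log_pos (by norm_num))
  have : -Real.log 3 * (Real.log 2 / Real.log 3) = -Real.log 2 := by
    field_simp
  rw [this, Real.exp_neg, Real.exp_log (by norm_num)]
  norm_num

lemma one_third_rpow (k : ℕ) : ((1/3 : ℝ) ^ k) ^ cantorDim = (1/2) ^ k := by
  have h3 : (0:ℝ) ≤ 1/3 := by norm_num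
  rw [← Real.rpow_natCast (1/3 : ℝ) k, ← Real.rpow_mul h3, mul_comm,
    Real.rpow_mul h3, one_third_rpow_base, Real.rpow_natCast]

lemma hausdorff_cI (l : List Bool) :
    μH[cantorDim] (cantorSet ∩ cI l) ≤ ENNReal.ofReal ((1/2) ^ l.length) := by
  set m := l.length with hm
  have key := Measure.hausdorffMeasure_le_liminf_sum cantorDim (cantorSet ∩ cI l)
      (ι := fun j : ℕ => Fin j → Bool) (l := Filter.atTop)
      (fun j : ℕ => ENNReal.ofReal ((1/3)^(m+j)))
      ?_ (fun j t => cI (l ++ List.ofFn t)) ?_ ?_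
  · refine key.trans ?_
    have hconst : ∀ j : ℕ, (∑ t : Fin j → Bool,
        Metric.ediam (cI (l ++ List.ofFn t)) ^ cantorDim) = ENNReal.ofReal ((1/2) ^ m) := by
      intro j
      have hdiam : ∀ t : Fin j → Bool,
          Metric.ediam (cI (l ++ List.ofFn t)) ^ cantorDim = ENNReal.ofReal ((1/2)^(m+j)) := by
        intro t
        rw [cI, Real.ediam_Icc, add_sub_cancel_left, List.length_append, List.length_ofFn, ← hm,
          ENNReal.ofReal_rpow_of_pos (by positivity), one_third_rpow]
      rw [Finset.sum_congr rfl (fun t _ => hdiam t), Finset.sum_const, Finset.card_univ]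
      have hcard : Fintype.card (Fin j → Bool) = 2 ^ j := by simp
      rw [hcard, nsmul_eq_mul]
      rw [← ENNReal.ofReal_natCast (2^j), ← ENNReal.ofReal_mul (by positivity)]
      congr 1
      push_cast
      rw [pow_add]
      field_simp
      ring_nf
      rw [← mul_pow]; norm_num
    rw [Filter.liminf_congr (Filter.Eventually.of_forall hconst) ]
    · simp [Filter.liminf_const]
  · -- tendsto
    have h1 : Filter.Tendsto (fun j : ℕ => (1/3 : ℝ)^(m+j)) Filter.atTop (nhds 0) := by
      simpa [pow_add] using
        (tendsto_pow_atTop_nhds_zero_of_lt_one (by norm_num : (0:ℝ) ≤ 1/3)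
          (by norm_num : (1/3:ℝ) < 1)).const_mul ((1/3:ℝ)^m)
    have := (ENNReal.continuous_ofReal.tendsto 0).comp h1
    simpa [Function.comp_def] using this
  · -- diam bound
    refine Filter.Eventually.of_forall fun j => fun t => ?_
    show Metric.ediam (cI (l ++ List.ofFn t)) ≤ ENNReal.ofReal ((1/3)^(m+j))
    rw [cI, Real.ediam_Icc, add_sub_cancel_left, List.length_append, List.length_ofFn, ← hm]
  · -- cover
    refine Filter.Eventually.of_forall fun j => ?_
    rintro x ⟨hxc, hxl⟩
    obtain ⟨t, ht, hxt⟩ := cantor_refine hxc hxl j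
    subst ht
    refine Set.mem_iUnion.mpr ⟨t.get, ?_⟩
    show x ∈ cI (l ++ List.ofFn t.get)
    rw [List.ofFn_get]
    exact hxt

lemma three_in_window {δ lo : ℝ} (hδ : 0 < δ) {x y z : ℝ}
    (hx : x ∈ Icc lo (lo + 2*δ)) (hy : y ∈ Icc lo (lo + 2*δ)) (hz : z ∈ Icc lo (lo + 2*δ))
    (hxy : 2*δ ≤ |x - y|) (hxz : 2*δ ≤ |x - z|) (hyz : 2*δ ≤ |y - z|) : False := by
  have pair : ∀ a b : ℝ, a ∈ Icc lo (lo+2*δ) → b ∈ Icc lo (lo+2*δ) → 2*δ ≤ |a - b| →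
      (a = lo ∧ b = lo + 2*δ) ∨ (b = lo ∧ a = lo + 2*δ) := by
    intro a b ha hb hab
    rcases abs_cases (a - b) with ⟨h1, _⟩ | ⟨h1, _⟩
    · right
      constructor <;> [linarith [ha.2, hb.1, hab.trans_eq h1]; linarith [ha.2, hb.1, hab.trans_eq h1]]
    · left
      constructor <;> [linarith [hb.2, ha.1, hab.trans_eq h1]; linarith [hb.2, ha.1, hab.trans_eq h1]]
  rcases pair x y hx hy hxy with ⟨h1, h2⟩ | ⟨h1, h2⟩ <;>
    rcases pair x z hx hz hxz with ⟨h3, h4⟩ | ⟨h3, h4⟩ <;>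
      rcases pair y z hy hz hyz with ⟨h5, h6⟩ | ⟨h5, h6⟩ <;> linarith

lemma hausdorff_Icc_le {a b : ℝ} (h0 : 0 < b - a) (h1 : b - a ≤ 1) :
    μH[cantorDim] (cantorSet ∩ Icc a b) ≤
      ENNReal.ofReal (6 * (b - a) ^ cantorDim) := by
  set ℓ := b - a with hℓdef
  set m := ⌊Real.logb 3 ℓ⁻¹⌋₊ with hmdef
  have hinv1 : 1 ≤ ℓ⁻¹ := (one_le_inv₀ h0).mpr h1
  have hlogb0 : 0 ≤ Real.logb 3 ℓ⁻¹ := Real.logb_nonneg (by norm_num) hinv1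
  have h3m : (0:ℝ) < 3 ^ m := by positivity
  have hup : ℓ ≤ (1/3) ^ m := by
    have hfl : (m : ℝ) ≤ Real.logb 3 ℓ⁻¹ := Nat.floor_le hlogb0
    have h1' : (3:ℝ) ^ (m:ℝ) ≤ (3:ℝ) ^ Real.logb 3 ℓ⁻¹ :=
      Real.rpow_le_rpow_of_exponent_le (by norm_num) hfl
    rw [Real.rpow_logb (by norm_num) (by norm_num) (by positivity), Real.rpow_natCast] at h1'
    rw [one_div, inv_pow]
    have := mul_le_mul_of_nonneg_left h1' h0.le
    rw [mul_inv_cancel₀ (ne_of_gt h0)] at this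
    have h2 := mul_le_mul_of_nonneg_right this (le_of_lt (inv_pos.mpr h3m))
    rwa [one_mul, mul_assoc, mul_inv_cancel₀ (ne_of_gt h3m), mul_one] at h2
  have hlo : (1/3 : ℝ) ^ (m+1) ≤ ℓ := by
    have hfl : Real.logb 3 ℓ⁻¹ < (m:ℝ) + 1 := Nat.lt_floor_add_one _
    have h1' : (3:ℝ) ^ Real.logb 3 ℓ⁻¹ ≤ (3:ℝ) ^ ((m:ℝ)+1) :=
      Real.rpow_le_rpow_of_exponent_le (by norm_num) hfl.le
    rw [Real.rpow_logb (by norm_num) (by norm_num) (by positivity)] at h1'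
    have hcast : (3:ℝ) ^ ((m:ℝ)+1) = (3:ℝ) ^ (m+1 : ℕ) := by
      rw [← Real.rpow_natCast (3:ℝ) (m+1)]
      push_cast
      ring_nf
    rw [hcast] at h1'
    have h3m1 : (0:ℝ) < 3 ^ (m+1) := by positivity
    rw [one_div, inv_pow]
    have := mul_le_mul_of_nonneg_left h1' (le_of_lt (inv_pos.mpr h3m1))
    rw [inv_mul_cancel₀ (ne_of_gt h3m1)] at this
    have h2 := mul_le_mul_of_nonneg_right this h0.le
    rwa [one_mul, mul_assoc, inv_mul_cancel₀ (ne_of_gt h0), mul_one] at h2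
  have hδ : (0:ℝ) < (1/3) ^ m := by positivity
  -- window membership of left endpoints of intervals meeting `cantorSet ∩ Icc a b`
  have hwin : ∀ l : List Bool, l.length = m → ((cantorSet ∩ Icc a b) ∩ cI l).Nonempty →
      cEnd l ∈ Icc (a - (1/3)^m) ((a - (1/3)^m) + 2*(1/3)^m) := by
    rintro l hl ⟨x, ⟨⟨_, hxab⟩, hxl⟩⟩
    simp only [cI, hl, mem_Icc] at hxl
    simp only [mem_Icc] at hxab ⊢
    constructor
    · linarith [hxl.2, hxab.1]
    · linarith [hxl.1, hxab.2, hup]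
  obtain ⟨l₁, l₂, hl₁, hl₂, hsub⟩ :
      ∃ l₁ l₂ : List Bool, l₁.length = m ∧ l₂.length = m ∧
        cantorSet ∩ Icc a b ⊆ (cantorSet ∩ cI l₁) ∪ (cantorSet ∩ cI l₂) := by
    by_cases hex : ∃ l : List Bool, l.length = m ∧ ((cantorSet ∩ Icc a b) ∩ cI l).Nonempty
    · obtain ⟨l₁, hl₁, hne₁⟩ := hex
      by_cases hex2 : ∃ l : List Bool, l.length = m ∧ l ≠ l₁ ∧
          ((cantorSet ∩ Icc a b) ∩ cI l).Nonempty
      · obtain ⟨l₂, hl₂, hne, hne₂⟩ := hex2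
        refine ⟨l₁, l₂, hl₁, hl₂, ?_⟩
        rintro x ⟨hxc, hxab⟩
        obtain ⟨l₃, hl₃, hxl₃⟩ := cantorSet_subset_cI m x hxc
        rcases eq_or_ne l₃ l₁ with rfl | h31
        · exact Or.inl ⟨hxc, hxl₃⟩
        rcases eq_or_ne l₃ l₂ with rfl | h32
        · exact Or.inr ⟨hxc, hxl₃⟩
        exfalso
        have hne₃ : ((cantorSet ∩ Icc a b) ∩ cI l₃).Nonempty := ⟨x, ⟨hxc, hxab⟩, hxl₃⟩
        refine three_in_window hδ (hwin l₁ hl₁ hne₁) (hwin l₂ hl₂ hne₂) (hwin l₃ hl₃ hne₃)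
          ?_ ?_ ?_
        · have h := cEnd_sep l₁ l₂ (by rw [hl₁, hl₂]) (Ne.symm hne)
          rwa [hl₁] at h
        · have h := cEnd_sep l₁ l₃ (by rw [hl₁, hl₃]) (Ne.symm h31)
          rwa [hl₁] at h
        · have h := cEnd_sep l₂ l₃ (by rw [hl₂, hl₃]) (Ne.symm h32)
          rwa [hl₂] at h
      · refine ⟨l₁, l₁, hl₁, hl₁, ?_⟩
        rintro x ⟨hxc, hxab⟩
        obtain ⟨l₃, hl₃, hxl₃⟩ := cantorSet_subset_cI m x hxc
        rcases eq_or_ne l₃ l₁ with rfl | h31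
        · exact Or.inl ⟨hxc, hxl₃⟩
        · exact absurd ⟨l₃, hl₃, h31, ⟨x, ⟨hxc, hxab⟩, hxl₃⟩⟩ hex2
    · refine ⟨List.replicate m true, List.replicate m true, by simp, by simp, ?_⟩
      rintro x ⟨hxc, hxab⟩
      obtain ⟨l₃, hl₃, hxl₃⟩ := cantorSet_subset_cI m x hxc
      exact absurd ⟨l₃, hl₃, ⟨x, ⟨hxc, hxab⟩, hxl₃⟩⟩ hex
  -- final measure computation
  have hreal : 2 * ((1:ℝ)/2)^m ≤ 6 * ℓ ^ cantorDim := by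
    have e1 : ((1:ℝ)/2)^m = ((1/3:ℝ)^m) ^ cantorDim := (one_third_rpow m).symm
    have e2 : ((1/3:ℝ)^m) ≤ 3 * ℓ := by
      have : ((1:ℝ)/3)^m = 3 * (1/3)^(m+1) := by rw [pow_succ]; ring
      rw [this]
      linarith [hlo]
    have e3 : ((1/3:ℝ)^m) ^ cantorDim ≤ (3*ℓ) ^ cantorDim :=
      Real.rpow_le_rpow (le_of_lt hδ) e2 cantorDim_pos.le
    have e4 : ((3:ℝ)*ℓ) ^ cantorDim = 3 ^ cantorDim * ℓ ^ cantorDim :=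
      Real.mul_rpow (by norm_num) h0.le
    have e5 : (3:ℝ) ^ cantorDim ≤ 3 := by
      calc (3:ℝ) ^ cantorDim ≤ 3 ^ (1:ℝ) :=
            Real.rpow_le_rpow_of_exponent_le (by norm_num) cantorDim_le_one
        _ = 3 := Real.rpow_one 3
    have e6 : (0:ℝ) ≤ ℓ ^ cantorDim := Real.rpow_nonneg h0.le _
    nlinarith [e3, e4, e5, e6, e1]
  calc μH[cantorDim] (cantorSet ∩ Icc a b)
      ≤ μH[cantorDim] ((cantorSet ∩ cI l₁) ∪ (cantorSet ∩ cI l₂)) := measure_mono hsub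
    _ ≤ μH[cantorDim] (cantorSet ∩ cI l₁) + μH[cantorDim] (cantorSet ∩ cI l₂) :=
        measure_union_le _ _
    _ ≤ ENNReal.ofReal ((1/2)^m) + ENNReal.ofReal ((1/2)^m) := by
        refine add_le_add ?_ ?_
        · simpa [hl₁] using hausdorff_cI l₁
        · simpa [hl₂] using hausdorff_cI l₂
    _ = ENNReal.ofReal (2 * (1/2)^m) := by
        rw [← ENNReal.ofReal_add (by positivity) (by positivity)]; ring_nf
    _ ≤ ENNReal.ofReal (6 * ℓ ^ cantorDim) := ENNReal.ofReal_le_ofReal hreal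

/-- the natural measure on the middle-third Cantor set -/
noncomputable def cantorMeasure : Measure ℝ := μH[cantorDim].restrict cantorSet

/-- distance from `x` to the nearest integer -/
noncomputable def nint (x : ℝ) : ℝ := |x - round x|

/-- `A_n^y(σ) = {x : ‖2^n x - y‖ < σ}` -/
def approxSet (n : ℕ) (y σ : ℝ) : Set ℝ := {x : ℝ | nint (2 ^ n * x - y) < σ}

lemma exists_ofFn {m : ℕ} {l : List Bool} (hl : l.length = m) :
    ∃ t : Fin m → Bool, List.ofFn t = l := by
  subst hl; exact ⟨l.get, List.ofFn_get l⟩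

lemma three_rpow : (3:ℝ) ^ cantorDim = 2 := by
  rw [Real.rpow_def_of_pos (by norm_num : (0:ℝ) < 3), cantorDim]
  have hlog3 : Real.log 3 ≠ 0 := ne_of_gt (Real.log_pos (by norm_num))
  have : Real.log 3 * (Real.log 2 / Real.log 3) = Real.log 2 := by field_simp
  rw [this, Real.exp_log (by norm_num)]

lemma piece_bound {n m : ℕ} (hn : 1 ≤ n) {y σ : ℝ} (hσ0 : 0 < σ) (hσ1 : σ ≤ 1)
    (l : List Bool) (hl : l.length = m) (h3 : (2:ℝ)^n ≤ 3^m) :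
    μH[cantorDim] (approxSet n y σ ∩ cantorSet ∩ cI l) ≤
      ENNReal.ofReal (36 * (2*σ/2^n) ^ cantorDim) := by
  have h2n : (0:ℝ) < 2^n := by positivity
  set u := cEnd l with hu
  set c := 2^n * u - y with hc
  set k₀ : ℤ := ⌈c⌉ - 2 with hk₀
  have hδ : ((1:ℝ)/3)^m ≤ (1/2)^n := by
    rw [one_div, one_div, inv_pow, inv_pow]
    exact inv_anti₀ (by positivity) h3
  have hsub : approxSet n y σ ∩ cantorSet ∩ cI l ⊆
      ⋃ k ∈ Finset.Icc k₀ (k₀ + 5), cantorSet ∩ Icc ((y+k-σ)/2^n) ((y+k+σ)/2^n) := by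
    rintro x ⟨⟨hxA, hxc⟩, hxl⟩
    set k : ℤ := round ((2:ℝ)^n * x - y) with hk
    have hnint : |2^n * x - y - k| < σ := hxA
    have hxI : u ≤ x ∧ x ≤ u + (1/3)^m := by
      simpa [cI, hl, Set.mem_Icc] using hxl
    have h2nx : 2^n * u ≤ 2^n * x ∧ 2^n * x ≤ 2^n * u + 1 := by
      constructor
      · nlinarith [hxI.1]
      · have h1 : (2:ℝ)^n * (1/2)^n = 1 := by
          rw [← mul_pow]; norm_num
        have hx2 : x ≤ u + (1/2)^n := le_trans hxI.2 (by linarith)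
        have := mul_le_mul_of_nonneg_left hx2 (le_of_lt h2n)
        nlinarith
    have hceil1 : (c:ℝ) ≤ ⌈c⌉ := Int.le_ceil c
    have hceil2 : (⌈c⌉:ℝ) ≤ c + 1 := by linarith [Int.ceil_lt_add_one c]
    have hkk : k₀ ≤ k ∧ k ≤ k₀ + 5 := by
      have habs := abs_lt.mp hnint
      have hk1 : c - 2 ≤ (k:ℝ) := by linarith [habs.2, h2nx.1]
      have hk2 : (k:ℝ) ≤ c + 2 := by linarith [habs.1, h2nx.2]
      constructor
      · have h : ((k₀:ℝ)) ≤ (k:ℝ) := by rw [hk₀]; push_cast; linarith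
        exact_mod_cast h
      · have h : ((k:ℝ)) ≤ ((k₀:ℝ)) + 5 := by rw [hk₀]; push_cast; linarith
        exact_mod_cast h
    refine Set.mem_biUnion (Finset.mem_Icc.mpr hkk) ⟨hxc, ?_⟩
    have habs := abs_lt.mp hnint
    rw [Set.mem_Icc]
    constructor
    · rw [div_le_iff₀ h2n]; nlinarith [habs.1]
    · rw [le_div_iff₀ h2n]; nlinarith [habs.2]
  calc μH[cantorDim] (approxSet n y σ ∩ cantorSet ∩ cI l)
      ≤ μH[cantorDim] (⋃ k ∈ Finset.Icc k₀ (k₀ + 5),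
          cantorSet ∩ Icc ((y+k-σ)/2^n) ((y+k+σ)/2^n)) := measure_mono hsub
    _ ≤ ∑ k ∈ Finset.Icc k₀ (k₀ + 5),
          μH[cantorDim] (cantorSet ∩ Icc ((y+k-σ)/2^n) ((y+k+σ)/2^n)) :=
        measure_biUnion_finset_le _ _
    _ ≤ ∑ _k ∈ Finset.Icc k₀ (k₀ + 5), ENNReal.ofReal (6 * (2*σ/2^n) ^ cantorDim) := by
        refine Finset.sum_le_sum fun k _ => ?_
        have hba : (y+k+σ)/2^n - (y+k-σ)/2^n = 2*σ/2^n := by field_simp; ring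
        have h0' : (0:ℝ) < (y+k+σ)/2^n - (y+k-σ)/2^n := by rw [hba]; positivity
        have h1' : (y+k+σ)/2^n - (y+k-σ)/2^n ≤ 1 := by
          rw [hba, div_le_one h2n]
          calc 2*σ ≤ 2 := by linarith
            _ ≤ 2^n := by
              calc (2:ℝ) = 2^1 := (pow_one 2).symm
                _ ≤ 2^n := pow_le_pow_right₀ (by norm_num) hn
        have := hausdorff_Icc_le h0' h1'
        rwa [hba] at this
    _ ≤ ENNReal.ofReal (36 * (2*σ/2^n) ^ cantorDim) := by
        rw [Finset.sum_const, Int.card_Icc]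
        have hcard : (k₀ + 5 + 1 - k₀).toNat = 6 := by omega
        rw [hcard, nsmul_eq_mul]
        rw [← ENNReal.ofReal_natCast 6, ← ENNReal.ofReal_mul (by norm_num)]
        apply ENNReal.ofReal_le_ofReal
        push_cast
        nlinarith [Real.rpow_nonneg (show (0:ℝ) ≤ 2*σ/2^n by positivity) cantorDim]

lemma cantorMeasure_approxSet_le {n : ℕ} (hn : 1 ≤ n) {y σ : ℝ} (hσ0 : 0 < σ) (hσ1 : σ ≤ 1) :
    cantorMeasure (approxSet n y σ) ≤ ENNReal.ofReal (144 * σ ^ cantorDim) := by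
  set m := ⌈(n:ℝ) * cantorDim⌉₊ with hm
  have h3m : (2:ℝ)^n ≤ 3^m := by
    calc (2:ℝ)^n = 2^(n:ℝ) := (Real.rpow_natCast 2 n).symm
      _ = 3^(cantorDim * (n:ℝ)) := by
          rw [Real.rpow_mul (by norm_num : (0:ℝ) ≤ 3), three_rpow]
      _ ≤ 3^(m:ℝ) := Real.rpow_le_rpow_of_exponent_le (by norm_num)
          (by rw [mul_comm]; exact Nat.le_ceil _)
      _ = 3^m := Real.rpow_natCast 3 m
  have h2m : (2:ℝ)^m ≤ 2 * (2:ℝ)^((n:ℝ) * cantorDim) := by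
    have h1 : (m:ℝ) ≤ (n:ℝ)*cantorDim + 1 :=
      (Nat.ceil_lt_add_one (mul_nonneg (Nat.cast_nonneg n) cantorDim_pos.le)).le
    calc (2:ℝ)^m = 2^(m:ℝ) := (Real.rpow_natCast 2 m).symm
      _ ≤ 2^((n:ℝ)*cantorDim + 1) := Real.rpow_le_rpow_of_exponent_le (by norm_num) h1
      _ = 2 * 2^((n:ℝ)*cantorDim) := by
          rw [Real.rpow_add (by norm_num), Real.rpow_one]; ring
  rw [cantorMeasure, Measure.restrict_apply' isClosed_cantorSet.measurableSet]
  have hcover : approxSet n y σ ∩ cantorSet ⊆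
      ⋃ t : Fin m → Bool, (approxSet n y σ ∩ cantorSet ∩ cI (List.ofFn t)) := by
    rintro x ⟨hxA, hxc⟩
    obtain ⟨l, hl, hxl⟩ := cantorSet_subset_cI m x hxc
    obtain ⟨t, rfl⟩ := exists_ofFn hl
    exact Set.mem_iUnion.mpr ⟨t, ⟨hxA, hxc⟩, hxl⟩
  calc μH[cantorDim] (approxSet n y σ ∩ cantorSet)
      ≤ μH[cantorDim] (⋃ t : Fin m → Bool,
          approxSet n y σ ∩ cantorSet ∩ cI (List.ofFn t)) := measure_mono hcover
    _ ≤ ∑ t : Fin m → Bool,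
          μH[cantorDim] (approxSet n y σ ∩ cantorSet ∩ cI (List.ofFn t)) :=
        measure_iUnion_fintype_le _ _
    _ ≤ ∑ _t : Fin m → Bool, ENNReal.ofReal (36 * (2*σ/2^n) ^ cantorDim) :=
        Finset.sum_le_sum fun t _ =>
          piece_bound hn hσ0 hσ1 (List.ofFn t) (by simp) h3m
    _ = (2^m : ℕ) • ENNReal.ofReal (36 * (2*σ/2^n)^cantorDim) := by
        rw [Finset.sum_const, Finset.card_univ]
        congr 1
        simp
    _ ≤ ENNReal.ofReal (144 * σ ^ cantorDim) := by
        rw [nsmul_eq_mul, ← ENNReal.ofReal_natCast, ← ENNReal.ofReal_mul (Nat.cast_nonneg _)]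
        apply ENNReal.ofReal_le_ofReal
        push_cast
        have hpow : ((2:ℝ)^n) ^ cantorDim = 2^((n:ℝ)*cantorDim) := by
          rw [← Real.rpow_natCast 2 n, ← Real.rpow_mul (by norm_num)]
        have hA : (2*σ/2^n) ^ cantorDim = (2*σ)^cantorDim / 2^((n:ℝ)*cantorDim) := by
          rw [Real.div_rpow (by positivity) (by positivity), hpow]
        have hB : (2*σ)^cantorDim ≤ 2 * σ^cantorDim := by
          rw [Real.mul_rpow (by norm_num) hσ0.le]
          have h2le : (2:ℝ)^cantorDim ≤ 2 := by
            calc (2:ℝ)^cantorDim ≤ 2^(1:ℝ) :=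
                  Real.rpow_le_rpow_of_exponent_le (by norm_num) cantorDim_le_one
              _ = 2 := Real.rpow_one 2
          nlinarith [Real.rpow_nonneg hσ0.le cantorDim]
        have hC : (0:ℝ) < 2^((n:ℝ)*cantorDim) := Real.rpow_pos_of_pos (by norm_num) _
        have key : (2:ℝ)^m * (2^((n:ℝ)*cantorDim))⁻¹ ≤ 2 := by
          rw [← div_eq_mul_inv, div_le_iff₀ hC]
          linarith [h2m]
        rw [hA, div_eq_mul_inv]
        have hprod := mul_le_mul key hB
          (Real.rpow_nonneg (by positivity) cantorDim) (by norm_num)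
        nlinarith [hprod, Real.rpow_nonneg hσ0.le cantorDim,
          (inv_pos.mpr hC).le, Real.rpow_nonneg (show (0:ℝ) ≤ 2*σ by linarith) cantorDim]

theorem stmt10 (y τ : ℝ) (hτ : 1 / cantorDim < τ) :
    (Summable fun n : ℕ => (cantorMeasure (approxSet n y ((n : ℝ) ^ (-τ)))).toReal) ∧
    cantorMeasure {x : ℝ | {n : ℕ | nint (2 ^ n * x - y) < (n : ℝ) ^ (-τ)}.Infinite} = 0 := by
  have hγ := cantorDim_pos
  have hτγ : 1 < τ * cantorDim := by
    rw [div_lt_iff₀ hγ] at hτ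
    linarith
  have hτ0 : 0 < τ := lt_trans (one_div_pos.mpr hγ) hτ
  set f : ℕ → ℝ≥0∞ := fun n => cantorMeasure (approxSet n y ((n:ℝ)^(-τ))) with hf
  have hzero : f 0 = 0 := by
    have h00 : ((0:ℕ):ℝ)^(-τ) = 0 := by
      rw [Nat.cast_zero, Real.zero_rpow (by linarith : -τ ≠ 0)]
    have hempty : approxSet 0 y (((0:ℕ):ℝ)^(-τ)) = ∅ := by
      rw [h00]
      ext x
      simp only [approxSet, Set.mem_setOf_eq, Set.mem_empty_iff_false, iff_false, not_lt]
      exact abs_nonneg _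
    show cantorMeasure (approxSet 0 y (((0:ℕ):ℝ)^(-τ))) = 0
    rw [hempty]
    exact measure_empty
  have hbound : ∀ n : ℕ, f n ≤ ENNReal.ofReal (144 * (n:ℝ)^(-(τ*cantorDim))) := by
    intro n
    rcases Nat.eq_zero_or_pos n with rfl | hn
    · rw [hzero]; exact zero_le
    · have hn1 : (1:ℝ) ≤ n := Nat.one_le_cast.mpr hn
      have hσ0 : 0 < (n:ℝ)^(-τ) := Real.rpow_pos_of_pos (by linarith) _
      have hσ1 : (n:ℝ)^(-τ) ≤ 1 :=
        Real.rpow_le_one_of_one_le_of_nonpos hn1 (by linarith)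
      refine (cantorMeasure_approxSet_le hn hσ0 hσ1 (y := y)).trans
        (ENNReal.ofReal_le_ofReal ?_)
      have hexp : ((n:ℝ)^(-τ))^cantorDim = (n:ℝ)^(-(τ*cantorDim)) := by
        rw [← Real.rpow_mul (Nat.cast_nonneg n), neg_mul]
      rw [hexp]
  have hg0 : ∀ n : ℕ, 0 ≤ 144 * (n:ℝ)^(-(τ*cantorDim)) := fun n => by positivity
  have hg : Summable (fun n : ℕ => 144 * (n:ℝ)^(-(τ*cantorDim))) :=
    (Real.summable_nat_rpow.mpr (by linarith)).mul_left 144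
  constructor
  · refine Summable.of_nonneg_of_le (fun n => ENNReal.toReal_nonneg) (fun n => ?_) hg
    exact ENNReal.toReal_le_of_le_ofReal (hg0 n) (hbound n)
  · have hsum : ∑' n, f n ≠ ⊤ := by
      have hle : ∑' n, f n ≤ ∑' n : ℕ, ENNReal.ofReal (144 * (n:ℝ)^(-(τ*cantorDim))) :=
        ENNReal.tsum_le_tsum hbound
      rw [← ENNReal.ofReal_tsum_of_nonneg hg0 hg] at hle
      exact ne_top_of_le_ne_top ENNReal.ofReal_ne_top hle
    have hlim := measure_limsup_atTop_eq_zero (μ := cantorMeasure)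
      (s := fun n => approxSet n y ((n:ℝ)^(-τ))) hsum
    have hset : {x : ℝ | {n : ℕ | nint (2 ^ n * x - y) < (n : ℝ) ^ (-τ)}.Infinite}
        = Filter.limsup (fun n => approxSet n y ((n:ℝ)^(-τ))) Filter.atTop := by
      ext x
      rw [Set.mem_setOf_eq, ← Nat.frequently_atTop_iff_infinite,
        Filter.mem_limsup_iff_frequently_mem]
      rfl
    rw [hset]
    exact hlim
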